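/- Hahn–Banach dual structure lemma: Let A, B > 0, let G ∈ ℓ²(ℤ), and let Φ be a family of vectors in ℓ²(ℤ). Assume the following inverse property: whenever f ∈ ℓ²(ℤ) satisfies ‖f‖_{ℓ^∞(ℤ)} ≤ 1 and |⟨f, G⟩| > A, then |⟨f, φ⟩| > B for some φ ∈ Φ. Then G lies in the closed convex hull (in ℓ²(ℤ)) of the set V = { λφ : φ ∈ Φ, |λ| ≤ A/B } ∪ { h ∈ ℓ²(ℤ) : ‖h‖_{ℓ¹(ℤ)} ≤ A }. -/

import Mathlib

open scoped ENNReal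

open scoped InnerProductSpace ComplexConjugate

/-- Hahn–Banach dual structure lemma: let `A, B > 0`, `G ∈ ℓ²(ℤ)`, and `Φ ⊆ ℓ²(ℤ)`.
If every `f ∈ ℓ²(ℤ)` with `‖f‖_∞ ≤ 1` and `|⟨f,G⟩| > A` satisfies `|⟨f,φ⟩| > B` for some
`φ ∈ Φ`, then `G` lies in the ℓ²-closed convex hull of
`{λφ : φ∈Φ, |λ| ≤ A/B} ∪ {h : ‖h‖_{ℓ¹} ≤ A}`.  Here `⟨f,g⟩ = Σ_x f(x) g(x)` is the
bilinear pairing. -/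
theorem stmt8 (A B : ℝ) (hA : 0 < A) (hB : 0 < B)
    (G : lp (fun _ : ℤ => ℂ) 2) (Φ : Set (lp (fun _ : ℤ => ℂ) 2))
    (hinv : ∀ f : lp (fun _ : ℤ => ℂ) 2, (∀ x : ℤ, ‖f x‖ ≤ 1) →
      A < ‖∑' x : ℤ, f x * G x‖ → ∃ φ ∈ Φ, B < ‖∑' x : ℤ, f x * φ x‖) :
    G ∈ closure (convexHull ℝ
      ({h : lp (fun _ : ℤ => ℂ) 2 | ∃ φ ∈ Φ, ∃ c : ℂ, ‖c‖ ≤ A / B ∧ h = c • φ} ∪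
        {h : lp (fun _ : ℤ => ℂ) 2 |
          Summable (fun x : ℤ => ‖h x‖) ∧ ∑' x : ℤ, ‖h x‖ ≤ A})) := by
  classical
  by_contra hG
  letI : InnerProductSpace ℝ (lp (fun _ : ℤ => ℂ) 2) :=
    InnerProductSpace.rclikeToReal ℂ (lp (fun _ : ℤ => ℂ) 2)
  obtain ⟨L, t, hLs, hLG⟩ := geometric_hahn_banach_closed_point
    ((convex_convexHull ℝ _).closure) isClosed_closure hG
  have hmem1 : ∀ φ ∈ Φ, ∀ c : ℂ, ‖c‖ ≤ A / B → L (c • φ) < t := fun φ hφ c hc =>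
    hLs _ (subset_closure (subset_convexHull ℝ _ (Or.inl ⟨φ, hφ, c, hc, rfl⟩)))
  have hmem2 : ∀ h : lp (fun _ : ℤ => ℂ) 2, Summable (fun x : ℤ => ‖h x‖) →
      (∑' x : ℤ, ‖h x‖) ≤ A → L h < t := fun h h1 h2 =>
    hLs _ (subset_closure (subset_convexHull ℝ _ (Or.inr ⟨h1, h2⟩)))
  set y : lp (fun _ : ℤ => ℂ) 2 :=
    (InnerProductSpace.toDual ℝ _).symm L with hy
  -- summability of the pairing
  have hsum : ∀ x : lp (fun _ : ℤ => ℂ) 2, Summable (fun i => x i * (star y) i) := by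
    intro x
    refine (lp.summable_inner (𝕜 := ℂ) y x).congr fun i => ?_
    simp [RCLike.inner_apply, mul_comm, lp.star_apply]
  -- the representation of L
  have hL : ∀ x : lp (fun _ : ℤ => ℂ) 2, L x = (∑' i, x i * (star y) i).re := by
    intro x
    have h1 : ⟪y, x⟫_ℝ = L x := InnerProductSpace.toDual_symm_apply
    have h2 : ⟪y, x⟫_ℝ = Complex.re ⟪y, x⟫_ℂ := rfl
    rw [← h1, h2, lp.inner_eq_tsum]
    congr 1
  -- t is positive
  have ht : 0 < t := by
    have := hmem2 0 (by simpa [lp.coeFn_zero] using summable_zero)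
      (by simp [lp.coeFn_zero]; positivity)
    simpa using this
  -- bound on coordinates of star y
  have hcoord : ∀ i : ℤ, ‖(star y : lp (fun _ : ℤ => ℂ) 2) i‖ ≤ t / A := by
    intro i
    set z : ℂ := (star y : lp (fun _ : ℤ => ℂ) 2) i with hz
    rcases eq_or_ne z 0 with h0 | h0
    · rw [h0]; simp; positivity
    · set c : ℂ := conj z / ‖z‖ with hc
      have hzn : (‖z‖ : ℂ) ≠ 0 := by exact_mod_cast norm_ne_zero_iff.mpr h0
      have hcz : c * z = (‖z‖ : ℂ) := by
        rw [hc, div_mul_eq_mul_div, mul_comm, Complex.mul_conj']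
        rw [div_eq_iff hzn]
        push_cast; ring
      have hcnorm : ‖c‖ = 1 := by
        rw [hc, norm_div, RCLike.norm_conj, Complex.norm_real, Real.norm_eq_abs, abs_norm,
          div_self (norm_ne_zero_iff.mpr h0)]
      set hh : lp (fun _ : ℤ => ℂ) 2 := lp.single 2 i ((A : ℂ) * c) with hhh
      have hcards : ∀ b : ℤ, b ≠ i → hh b = 0 := by
        intro b hb; simp [hhh, lp.single_apply_ne 2 i _ hb, Pi.single_apply, hb]
      have hhsum : Summable (fun x : ℤ => ‖hh x‖) := by
        apply summable_of_ne_finset_zero (s := {i})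
        intro b hb
        simp only [Finset.mem_singleton] at hb
        simp [hcards b hb]
      have hhtsum : (∑' x : ℤ, ‖hh x‖) = A := by
        rw [tsum_eq_single i]
        · simp [hhh, lp.single_apply_self, hcnorm, abs_of_pos hA]
        · intro b hb; simp [hcards b hb]
      have hLh : L hh = A * ‖z‖ := by
        rw [hL, tsum_eq_single i]
        · rw [hhh, lp.single_apply_self, ← hz]
          have : (A : ℂ) * c * z = ((A * ‖z‖ : ℝ) : ℂ) := by
            rw [mul_assoc, hcz]; push_cast; ring
          rw [this, Complex.ofReal_re]
        · intro b hb; simp [hcards b hb]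
      have hlt := hmem2 hh hhsum (le_of_eq hhtsum)
      rw [hLh] at hlt
      rw [le_div_iff₀ hA]
      nlinarith
  -- bound on pairings with Φ
  have hphi : ∀ φ ∈ Φ, ‖∑' i, φ i * (star y) i‖ ≤ t * B / A := by
    intro φ hφ
    set z : ℂ := ∑' i, φ i * (star y) i with hz
    rcases eq_or_ne z 0 with h0 | h0
    · rw [h0]; simp; positivity
    · set e : ℂ := conj z / ‖z‖ with he
      have hzn : (‖z‖ : ℂ) ≠ 0 := by exact_mod_cast norm_ne_zero_iff.mpr h0
      have hez : e * z = (‖z‖ : ℂ) := by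
        rw [he, div_mul_eq_mul_div, mul_comm, Complex.mul_conj']
        rw [div_eq_iff hzn]
        push_cast; ring
      have henorm : ‖e‖ = 1 := by
        rw [he, norm_div, RCLike.norm_conj, Complex.norm_real, Real.norm_eq_abs, abs_norm,
          div_self (norm_ne_zero_iff.mpr h0)]
      set c : ℂ := e * ((A / B : ℝ) : ℂ) with hcc
      have hcnorm : ‖c‖ ≤ A / B := by
        rw [hcc, norm_mul, henorm, one_mul, Complex.norm_real,
          Real.norm_eq_abs, abs_of_pos (by positivity)]
      have hLv : L (c • φ) = (A / B) * ‖z‖ := by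
        rw [hL]
        have hco : ∀ i : ℤ, (c • φ : lp (fun _ : ℤ => ℂ) 2) i * (star y) i
            = c * (φ i * (star y) i) := by
          intro i
          rw [lp.coeFn_smul, Pi.smul_apply, smul_eq_mul, mul_assoc]
        rw [tsum_congr hco, tsum_mul_left, ← hz]
        have hcz2 : c * z = (((A / B) * ‖z‖ : ℝ) : ℂ) := by
          rw [hcc, mul_comm e, mul_assoc, hez]; push_cast; ring
        rw [hcz2, Complex.ofReal_re]
      have hlt := hmem1 φ hφ c hcnorm
      rw [hLv] at hlt
      rw [div_mul_eq_mul_div, div_lt_iff₀ hB] at hlt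
      rw [le_div_iff₀ hA]
      nlinarith
  -- the contradiction
  set f : lp (fun _ : ℤ => ℂ) 2 := ((A / t : ℝ) : ℂ) • star y with hf
  have hfco : ∀ i : ℤ, f i = ((A / t : ℝ) : ℂ) * (star y) i := by
    intro i; rw [hf, lp.coeFn_smul, Pi.smul_apply, smul_eq_mul]
  have hf1 : ∀ x : ℤ, ‖f x‖ ≤ 1 := by
    intro x
    rw [hfco, norm_mul, Complex.norm_real, Real.norm_eq_abs, abs_of_pos (by positivity)]
    calc A / t * ‖(star y) x‖ ≤ A / t * (t / A) :=
          mul_le_mul_of_nonneg_left (hcoord x) (by positivity)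
      _ = 1 := by field_simp
  have hpair : ∀ x : lp (fun _ : ℤ => ℂ) 2,
      (∑' i, f i * x i) = ((A / t : ℝ) : ℂ) * ∑' i, x i * (star y) i := by
    intro x
    rw [← tsum_mul_left]
    refine tsum_congr fun i => ?_
    rw [hfco]; ring
  have hfG : A < ‖∑' x : ℤ, f x * G x‖ := by
    have h1 : (∑' x : ℤ, f x * G x).re = (A / t) * L G := by
      rw [hpair, hL]
      rw [Complex.re_ofReal_mul]
    have h2 : A < (A / t) * L G := by
      calc A = (A / t) * t := by field_simp
        _ < (A / t) * L G := by
            apply mul_lt_mul_of_pos_left hLG (by positivity)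
    calc A < (∑' x : ℤ, f x * G x).re := by rw [h1]; exact h2
      _ ≤ ‖∑' x : ℤ, f x * G x‖ := Complex.re_le_norm _
  obtain ⟨φ, hφΦ, hφ⟩ := hinv f hf1 hfG
  have : ‖∑' x : ℤ, f x * φ x‖ ≤ B := by
    rw [hpair, norm_mul, Complex.norm_real, Real.norm_eq_abs, abs_of_pos (by positivity)]
    calc A / t * ‖∑' i, φ i * (star y) i‖ ≤ A / t * (t * B / A) :=
          mul_le_mul_of_nonneg_left (hphi φ hφΦ) (by positivity)
      _ = B := by field_simp
  linarith
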